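/- For every preference profile P and every tiebreaker τ for P, every River winner is a Split Cycle winner, i.e., RV(P,τ) ⊆ SC(P). -/

import Mathlib

/-! ## Preference profiles -/

/-- A preference profile: a finite set of voters, a finite set of alternatives,
and for each voter a (Boolean-valued) preference relation, `pref i x y` meaning
voter `i` ranks `x` above `y`. -/
structure Profile (ν α : Type) where
  voters : Finset ν
  alts : Finset α
  pref : ν → α → α → Bool

namespace Profile

variable {ν α : Type}

/-- A profile is valid if there is at least one voter, at least two alternatives,
and every voter's preference is a strict linear order on the alternatives. -/
def Valid (P : Profile ν α) : Prop :=
  P.voters.Nonempty ∧ 2 ≤ P.alts.card ∧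
  (∀ i ∈ P.voters, ∀ a ∈ P.alts, ¬ P.pref i a a) ∧
  (∀ i ∈ P.voters, ∀ a ∈ P.alts, ∀ b ∈ P.alts, ∀ c ∈ P.alts,
      P.pref i a b → P.pref i b c → P.pref i a c) ∧
  (∀ i ∈ P.voters, ∀ a ∈ P.alts, ∀ b ∈ P.alts, a ≠ b → (P.pref i a b ↔ ¬ P.pref i b a))

/-- The majority margin of `x` over `y`. -/
def margin (P : Profile ν α) (x y : α) : ℤ :=
  ((P.voters.filter (fun i => P.pref i x y)).card : ℤ) -
    ((P.voters.filter (fun i => P.pref i y x)).card : ℤ)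

/-- The restriction of a profile to the alternatives other than `x`. -/
def restrict [DecidableEq α] (P : Profile ν α) (x : α) : Profile ν α :=
  ⟨P.voters, P.alts.erase x, P.pref⟩

/-- `y` Pareto-dominates `x`: every voter ranks `y` above `x`,
i.e. the margin of `y` over `x` equals the number of voters. -/
def ParetoDominates (P : Profile ν α) (y x : α) : Prop :=
  P.margin y x = P.voters.card

/-- A profile is uniquely weighted if no margin between distinct alternatives is zero and
distinct ordered pairs of distinct alternatives have distinct margins. -/
def UniquelyWeighted (P : Profile ν α) : Prop :=
  (∀ x ∈ P.alts, ∀ y ∈ P.alts, x ≠ y → P.margin x y ≠ 0) ∧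
  (∀ x ∈ P.alts, ∀ y ∈ P.alts, ∀ v ∈ P.alts, ∀ w ∈ P.alts,
      x ≠ y → v ≠ w → (x, y) ≠ (v, w) → P.margin x y ≠ P.margin v w)

end Profile

/-! ## Lists, precedence, tiebreakers -/

/-- `e` precedes `f` in the list `L`. -/
def Precedes {β : Type} (L : List β) (e f : β) : Prop :=
  ∃ l₁ l₂ l₃ : List β, L = l₁ ++ e :: (l₂ ++ f :: l₃)

/-- A tiebreaker for a profile `P`: a linear order (list) of all ordered pairs of distinct
alternatives with nonnegative margin, in which pairs with strictly larger margin come first. -/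
def IsTiebreaker {ν α : Type} (P : Profile ν α) (L : List (α × α)) : Prop :=
  L.Nodup ∧
  (∀ e : α × α, e ∈ L ↔ e.1 ∈ P.alts ∧ e.2 ∈ P.alts ∧ e.1 ≠ e.2 ∧ 0 ≤ P.margin e.1 e.2) ∧
  L.Pairwise (fun e f => P.margin f.1 f.2 ≤ P.margin e.1 e.2)

/-! ## The River method -/

open Classical in
/-- The River diagram: process the edges in the order given by `L`, adding an edge unless
it would create a directed cycle or a second incoming edge at its target. -/
noncomputable def riverDiagram {α : Type} (L : List (α × α)) : Finset (α × α) :=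
  L.foldl (fun E e =>
    if (∃ f ∈ E, f.2 = e.2) ∨ Relation.ReflTransGen (fun a b => (a, b) ∈ E) e.2 e.1
    then E else insert e E) ∅

open Classical in
/-- The River winners: the sources (vertices with no incoming edge) of the River diagram. -/
noncomputable def riverWinners {ν α : Type} (P : Profile ν α) (L : List (α × α)) : Finset α :=
  P.alts.filter (fun x => ∀ f ∈ riverDiagram L, f.2 ≠ x)

/-! ## Split Cycle -/

/-- The (cyclically) consecutive edges of a cycle given by a list of distinct vertices. -/
def cycleEdges {α : Type} (c : List α) : List (α × α) := c.zip (c.rotate 1)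

/-- A majority cycle: a cycle of distinct alternatives all of whose edges have positive margin. -/
def IsMajorityCycle {ν α : Type} (P : Profile ν α) (c : List α) : Prop :=
  c.Nodup ∧ (∀ a ∈ c, a ∈ P.alts) ∧ ∀ e ∈ cycleEdges c, 0 < P.margin e.1 e.2

/-- `e` is a splitting edge of some majority cycle: it attains the minimum margin on the cycle. -/
def IsSplittingEdge {ν α : Type} (P : Profile ν α) (e : α × α) : Prop :=
  ∃ c : List α, IsMajorityCycle P c ∧ e ∈ cycleEdges c ∧
    ∀ f ∈ cycleEdges c, P.margin e.1 e.2 ≤ P.margin f.1 f.2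

open Classical in
/-- The Split Cycle winners: alternatives with no incoming edge in the Split Cycle diagram,
whose edges are the positive-margin pairs that are not splitting edges of any majority cycle. -/
noncomputable def splitCycleWinners {ν α : Type} (P : Profile ν α) : Finset α :=
  P.alts.filter (fun x => ¬ ∃ y ∈ P.alts, 0 < P.margin y x ∧ ¬ IsSplittingEdge P (y, x))

/-! ## Ranked Pairs -/

/-- A processing order for Ranked Pairs: all pairs with positive margin,
ordered by decreasing margin. -/
def IsRPOrder {ν α : Type} (P : Profile ν α) (L : List (α × α)) : Prop :=
  L.Nodup ∧
  (∀ e : α × α, e ∈ L ↔ e.1 ∈ P.alts ∧ e.2 ∈ P.alts ∧ 0 < P.margin e.1 e.2) ∧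
  L.Pairwise (fun e f => P.margin f.1 f.2 ≤ P.margin e.1 e.2)

open Classical in
/-- The Ranked Pairs diagram: add each edge in order unless it would create a directed cycle. -/
noncomputable def rpDiagram {α : Type} (L : List (α × α)) : Finset (α × α) :=
  L.foldl (fun E e =>
    if Relation.ReflTransGen (fun a b => (a, b) ∈ E) e.2 e.1 then E else insert e E) ∅

open Classical in
/-- The Ranked Pairs winners: sources of the Ranked Pairs diagram. -/
noncomputable def rpWinners {ν α : Type} (P : Profile ν α) (L : List (α × α)) : Finset α :=
  P.alts.filter (fun x => ∀ f ∈ rpDiagram L, f.2 ≠ x)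

/-! ## Beat Path -/

/-- A majority path: a sequence of distinct alternatives with positive margins along it. -/
def IsMajorityPath {ν α : Type} (P : Profile ν α) (p : List α) : Prop :=
  p.Nodup ∧ (∀ a ∈ p, a ∈ P.alts) ∧ p.Chain' (fun a b => 0 < P.margin a b)

/-- `s_P(x,y)`: the maximum strength (minimum margin along the path) of a majority path
from `x` to `y`, and `0` if there is no such path. -/
noncomputable def beatPathStrength {ν α : Type} (P : Profile ν α) (x y : α) : ℤ :=
  sSup ({0} ∪ {s : ℤ | ∃ p : List α, IsMajorityPath P p ∧ p.head? = some x ∧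
    p.getLast? = some y ∧ ((p.zip p.tail).map (fun e => P.margin e.1 e.2)).min? = some s})

open Classical in
/-- The Beat Path winners. -/
noncomputable def beatPathWinners {ν α : Type} (P : Profile ν α) : Finset α :=
  P.alts.filter (fun x => ∀ y ∈ P.alts, y ≠ x →
    beatPathStrength P y x ≤ beatPathStrength P x y)

/-! ## Stable Voting -/

/-- Auxiliary, fuel-based definition of Stable Voting (for uniquely weighted profiles).
If only one alternative remains it wins; otherwise the winner is the alternative `x` of the
first pair `(x,y)` (ordered by decreasing margin) with `m(x,y) > 0` and `x` a Split Cycle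
winner, such that `x` is a Stable Voting winner of the profile without `y`. -/
noncomputable def svAux {ν α : Type} [DecidableEq α] : ℕ → Profile ν α → Set α
  | 0, P => ↑P.alts
  | (n+1), P =>
      if P.alts.card ≤ 1 then ↑P.alts
      else {x | x ∈ P.alts ∧ ∃ y ∈ P.alts, 0 < P.margin x y ∧ x ∈ splitCycleWinners P ∧
        x ∈ svAux n (P.restrict y) ∧
        ∀ x' ∈ P.alts, ∀ y' ∈ P.alts, 0 < P.margin x' y' → x' ∈ splitCycleWinners P →
          P.margin x y < P.margin x' y' → x' ∉ svAux n (P.restrict y')}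

/-- The Stable Voting winners (for uniquely weighted profiles). -/
noncomputable def svWinners {ν α : Type} [DecidableEq α] (P : Profile ν α) : Set α :=
  svAux P.alts.card P

/-! ## Smith set, covering, quasi-Pareto domination -/

/-- A dominant set of alternatives: nonempty, and each member defeats every non-member. -/
def IsDominant {ν α : Type} (P : Profile ν α) (X : Finset α) : Prop :=
  X.Nonempty ∧ X ⊆ P.alts ∧ ∀ x ∈ X, ∀ y ∈ P.alts, y ∉ X → 0 < P.margin x y

/-- The Smith set: the inclusion-minimal dominant set. -/
def IsSmithSet {ν α : Type} (P : Profile ν α) (S : Finset α) : Prop :=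
  IsDominant P S ∧ ∀ X : Finset α, IsDominant P X → S ⊆ X

/-- `y` covers `x`: `y` defeats `x` and does at least as well against every third alternative. -/
def Covers {ν α : Type} (P : Profile ν α) (y x : α) : Prop :=
  0 < P.margin y x ∧ ∀ z ∈ P.alts, z ≠ x → z ≠ y → P.margin x z ≤ P.margin y z

/-- `y` quasi-Pareto-dominates `x`. -/
def QuasiParetoDominates {ν α : Type} (P : Profile ν α) (y x : α) : Prop :=
  Covers P y x ∧ ∀ z ∈ P.alts, z ≠ x → z ≠ y →
    P.margin z x ≤ P.margin y x ∧ P.margin x z ≤ P.margin y x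

/-! ## Tiebreaker functions -/

/-- A consistent tiebreaker function: it assigns a tiebreaker to every profile, and the relative
order of two edges not involving `x` is unchanged when `x` is removed from the profile. -/
def IsConsistentTBF {ν α : Type} [DecidableEq α] (T : Profile ν α → List (α × α)) : Prop :=
  (∀ P : Profile ν α, IsTiebreaker P (T P)) ∧
  ∀ (P : Profile ν α) (x a b c d : α), x ∈ P.alts →
    x ≠ a → x ≠ b → x ≠ c → x ≠ d →
    (a, b) ∈ T P → (c, d) ∈ T P →
    (Precedes (T P) (a, b) (c, d) ↔ Precedes (T (P.restrict x)) (a, b) (c, d))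

/-- A Pareto-consistent tiebreaker function: consistent, and whenever `y` Pareto-dominates `x`,
the edge `(y,z)` precedes the edge `(x,z)` for every third alternative `z`. -/
def IsParetoConsistentTBF {ν α : Type} [DecidableEq α]
    (T : Profile ν α → List (α × α)) : Prop :=
  IsConsistentTBF T ∧
  ∀ (P : Profile ν α) (x y z : α), P.ParetoDominates y x →
    z ≠ x → z ≠ y → (y, z) ∈ T P → (x, z) ∈ T P → Precedes (T P) (y, z) (x, z)

/-- A quasi-Pareto-consistent tiebreaker function. -/
def IsQuasiParetoConsistentTBF {ν α : Type} [DecidableEq α]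
    (T : Profile ν α → List (α × α)) : Prop :=
  IsParetoConsistentTBF T ∧
  (∀ (P : Profile ν α) (x y y' : α),
      P.margin y x = P.margin y' x → QuasiParetoDominates P y x →
      ¬ QuasiParetoDominates P y' x →
      (y, x) ∈ T P → (y', x) ∈ T P → Precedes (T P) (y, x) (y', x)) ∧
  (∀ (P : Profile ν α) (x y z : α), QuasiParetoDominates P y x →
      ((x, z) ∈ T P → (y, z) ∈ T P → Precedes (T P) (y, z) (x, z)) ∧
      ((x, z) ∈ T P → (y, x) ∈ T P → Precedes (T P) (y, x) (x, z)))

/-- A tiebreaker for `P` induced by the fixed tie-breaking order `r` on pairs: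
edges are ordered by decreasing margin, ties in margin broken according to `r`. -/
def IsTiebreakerVia {ν α : Type} (r : α × α → α × α → Prop) (P : Profile ν α)
    (L : List (α × α)) : Prop :=
  IsTiebreaker P L ∧ ∀ e f : α × α, Precedes L e f →
    P.margin f.1 f.2 < P.margin e.1 e.2 ∨ (P.margin e.1 e.2 = P.margin f.1 f.2 ∧ r e f)

section RiverAux

open List Classical

variable {α : Type}

private lemma chain_exists_pred {r : α → α → Prop} :
    ∀ {l : List α} {a b : α}, List.Chain r a l → b ∈ l → ∃ c, r c b := by
  intro l
  induction l with
  | nil => intro a b _ h; simp at h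
  | cons c t ih =>
    intro a b hch hb
    rcases List.chain_cons.1 hch with ⟨hr, hct⟩
    rcases List.mem_cons.1 hb with hb | hb
    · exact ⟨a, hb ▸ hr⟩
    · exact ih hct hb

private lemma chain_shrink {r : α → α → Prop} :
    ∀ (n : ℕ) (l : List α) (a : α), l.length ≤ n → List.Chain r a l →
      ∃ l', List.Chain r a l' ∧ (a :: l').getLast? = (a :: l).getLast? ∧
        (a :: l').Nodup ∧ l' ⊆ l := by
  intro n
  induction n with
  | zero =>
    intro l a hl _
    have : l = [] := List.length_eq_zero_iff.1 (Nat.le_zero.1 hl)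
    subst this
    exact ⟨[], List.Chain.nil, rfl, by simp, by simp⟩
  | succ n ih =>
    intro l a hl hch
    by_cases hmem : a ∈ l
    · obtain ⟨l₁, l₂, rfl⟩ := List.append_of_mem hmem
      have hch2 : List.Chain r a l₂ := (List.isChain_cons_split.1 hch).2
      have hlen : l₂.length ≤ n := by
        simp only [List.length_append, List.length_cons] at hl; omega
      obtain ⟨l', h1, h2, h3, h4⟩ := ih l₂ a hlen hch2
      refine ⟨l', h1, ?_, h3, fun x hx => by
        simp only [List.mem_append, List.mem_cons]
        exact Or.inr (Or.inr (h4 hx))⟩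
      rw [h2]
      have : a :: (l₁ ++ a :: l₂) = (a :: l₁) ++ (a :: l₂) := by simp
      rw [this, List.getLast?_append, List.getLast?_eq_getLast (List.cons_ne_nil _ _)]
      rfl
    · cases l with
      | nil => exact ⟨[], List.Chain.nil, rfl, by simp, by simp⟩
      | cons b t =>
        rcases List.chain_cons.1 hch with ⟨hr, hbt⟩
        have hlen : t.length ≤ n := by simp only [List.length_cons] at hl; omega
        obtain ⟨l', h1, h2, h3, h4⟩ := ih t b hlen hbt
        have hsub : b :: l' ⊆ b :: t := List.cons_subset_cons b h4
        refine ⟨b :: l', List.chain_cons.2 ⟨hr, h1⟩, ?_, ?_, hsub⟩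
        · rw [List.getLast?_cons_cons, List.getLast?_cons_cons, h2]
        · exact List.nodup_cons.2 ⟨fun hc => hmem (hsub hc), h3⟩

private lemma chain_zip2 {r : α → α → Prop} :
    ∀ (m : List α) (a b : α), List.Chain r a (m ++ [b]) →
      ∀ e ∈ (a :: m).zip (m ++ [b]), r e.1 e.2 := by
  intro m
  induction m with
  | nil =>
    intro a b hch e he
    simp only [List.nil_append, List.zip_cons_cons, List.zip_nil_left, List.mem_singleton] at he
    subst he
    exact (List.chain_cons.1 hch).1
  | cons c t ih =>
    intro a b hch e he
    rcases List.chain_cons.1 hch with ⟨hr, hct⟩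
    simp only [List.cons_append, List.zip_cons_cons, List.mem_cons] at he
    rcases he with rfl | he
    · exact hr
    · exact ih c b hct e he

private noncomputable def riverStep (E : Finset (α × α)) (e : α × α) : Finset (α × α) :=
  if (∃ f ∈ E, f.2 = e.2) ∨ Relation.ReflTransGen (fun a b => (a, b) ∈ E) e.2 e.1
  then E else insert e E

private lemma riverDiagram_eq (L : List (α × α)) :
    riverDiagram L = L.foldl riverStep ∅ := rfl

private lemma riverStep_supset (E : Finset (α × α)) (e : α × α) : E ⊆ riverStep E e := by
  unfold riverStep; split
  · exact Finset.Subset.refl E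
  · exact Finset.subset_insert e E

private lemma riverStep_subset (E : Finset (α × α)) (e : α × α) :
    riverStep E e ⊆ insert e E := by
  unfold riverStep; split
  · exact Finset.subset_insert e E
  · exact Finset.Subset.refl _

private lemma foldl_river_mono :
    ∀ (l : List (α × α)) (E : Finset (α × α)), E ⊆ l.foldl riverStep E := by
  intro l
  induction l with
  | nil => intro E; simp
  | cons e t ih =>
    intro E
    rw [List.foldl_cons]
    exact (riverStep_supset E e).trans (ih _)

private lemma foldl_river_bound :
    ∀ (l : List (α × α)) (E : Finset (α × α)) (f : α × α),
      f ∈ l.foldl riverStep E → f ∈ E ∨ f ∈ l := by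
  intro l
  induction l with
  | nil => intro E f hf; simp only [List.foldl_nil] at hf; exact Or.inl hf
  | cons e t ih =>
    intro E f hf
    rw [List.foldl_cons] at hf
    rcases ih _ f hf with h | h
    · rcases Finset.mem_insert.1 (riverStep_subset E e h) with h | h
      · exact Or.inr (by simp [h])
      · exact Or.inl h
    · exact Or.inr (List.mem_cons_of_mem _ h)

end RiverAux

/-! ## STATEMENT 0: every River winner is a Split Cycle winner -/

theorem river_subset_splitCycle {ν α : Type} (P : Profile ν α) (hP : P.Valid)
    (L : List (α × α)) (hL : IsTiebreaker P L) :
    riverWinners P L ⊆ splitCycleWinners P := by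
  classical
  intro x hx
  simp only [riverWinners, Finset.mem_filter] at hx
  obtain ⟨hxA, hsrc⟩ := hx
  simp only [splitCycleWinners, Finset.mem_filter]
  refine ⟨hxA, ?_⟩
  rintro ⟨y, hyA, hyx, hns⟩
  apply hns
  -- `y ≠ x`
  have hmxx : P.margin x x = 0 := by simp [Profile.margin]
  have hyxne : y ≠ x := by
    rintro rfl; rw [hmxx] at hyx; exact lt_irrefl 0 hyx
  -- `(y, x)` is in the tiebreaker list
  have hmemL : (y, x) ∈ L := (hL.2.1 (y, x)).2 ⟨hyA, hxA, hyxne, le_of_lt hyx⟩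
  obtain ⟨l₁, l₂, hLeq⟩ := List.append_of_mem hmemL
  set E1 : Finset (α × α) := l₁.foldl riverStep ∅ with hE1
  have hfold : riverDiagram L = l₂.foldl riverStep (riverStep E1 (y, x)) := by
    rw [riverDiagram_eq, hLeq, List.foldl_append, List.foldl_cons]
  have hE1sub : E1 ⊆ riverDiagram L := by
    rw [hfold]
    exact (riverStep_supset E1 (y, x)).trans (foldl_river_mono l₂ _)
  -- the edge `(y,x)` was rejected, so there is a path from `x` to `y` in `E1`
  have hpath : Relation.ReflTransGen (fun a b => (a, b) ∈ E1) x y := by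
    by_cases hcond : (∃ f ∈ E1, f.2 = (y, x).2) ∨
        Relation.ReflTransGen (fun a b => (a, b) ∈ E1) (y, x).2 (y, x).1
    · rcases hcond with ⟨f, hf, hfx⟩ | h
      · exact absurd hfx (hsrc f (hE1sub hf))
      · exact h
    · exfalso
      have hstep : riverStep E1 (y, x) = insert (y, x) E1 := if_neg hcond
      have : (y, x) ∈ riverDiagram L := by
        rw [hfold]
        exact foldl_river_mono l₂ _ (hstep ▸ Finset.mem_insert_self _ _)
      exact hsrc (y, x) this rfl
  -- every edge of `E1` comes earlier in `L`, hence has margin `≥ m(y,x)`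
  have hE1l₁ : ∀ f ∈ E1, f ∈ l₁ := by
    intro f hf
    rcases foldl_river_bound l₁ ∅ f hf with h | h
    · simp at h
    · exact h
  have hsorted := hL.2.2
  rw [hLeq] at hsorted
  have hpw := (List.pairwise_append.1 hsorted).2.2
  have hmargE1 : ∀ f ∈ E1, P.margin y x ≤ P.margin f.1 f.2 := by
    intro f hf
    exact hpw f (hE1l₁ f hf) (y, x) List.mem_cons_self
  have hE1alts : ∀ f ∈ E1, f.1 ∈ P.alts ∧ f.2 ∈ P.alts := by
    intro f hf
    have : f ∈ L := hLeq ▸ List.mem_append_left _ (hE1l₁ f hf)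
    have h := (hL.2.1 f).1 this
    exact ⟨h.1, h.2.1⟩
  -- extract a nodup chain from `x` to `y`
  obtain ⟨l, hchain, hlast⟩ := List.exists_isChain_cons_of_relationReflTransGen hpath
  have hlast? : (x :: l).getLast? = some y := by
    rw [List.getLast?_eq_getLast (List.cons_ne_nil _ _), hlast]
  obtain ⟨l', hch', hl'last, hl'nd, _⟩ :=
    chain_shrink l.length l x le_rfl hchain
  rw [hlast?] at hl'last
  have hl'ne : l' ≠ [] := by
    rintro rfl
    simp only [List.getLast?_singleton, Option.some.injEq] at hl'last
    exact hyxne (hl'last.symm)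
  obtain ⟨m, b, rfl⟩ := (List.eq_nil_or_concat l').resolve_left hl'ne
  simp only [List.concat_eq_append] at hch' hl'last hl'nd
  have hby : y = b := by
    have : (x :: (m ++ [b])).getLast? = some b := by
      rw [show x :: (m ++ [b]) = (x :: m) ++ [b] by simp, List.getLast?_concat]
    rw [this] at hl'last
    exact (Option.some.injEq _ _ ▸ hl'last).symm
  subst hby
  -- the cycle and its edges
  have hedges : cycleEdges (x :: (m ++ [y])) = (x :: m).zip (m ++ [y]) ++ [(y, x)] := by
    unfold cycleEdges
    rw [show (1 : ℕ) = 0 + 1 from rfl, List.rotate_cons_succ, List.rotate_zero]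
    rw [show x :: (m ++ [y]) = (x :: m) ++ [y] by simp]
    rw [List.zip_append (by simp)]
    rfl
  have hzipE1 : ∀ e ∈ (x :: m).zip (m ++ [y]), e ∈ E1 :=
    chain_zip2 m x y hch'
  have hedgeprop : ∀ e ∈ cycleEdges (x :: (m ++ [y])), P.margin y x ≤ P.margin e.1 e.2 := by
    intro e he
    rw [hedges, List.mem_append] at he
    rcases he with he | he
    · exact hmargE1 e (hzipE1 e he)
    · rw [List.mem_singleton] at he
      subst he
      exact le_refl _
  refine ⟨x :: (m ++ [y]), ⟨hl'nd, ?_, ?_⟩, ?_, ?_⟩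
  · -- all vertices are alternatives
    intro a ha
    rcases List.mem_cons.1 ha with rfl | ha
    · exact hxA
    · obtain ⟨c, hc⟩ := chain_exists_pred hch' ha
      exact (hE1alts _ hc).2
  · intro e he
    exact lt_of_lt_of_le hyx (hedgeprop e he)
  · rw [hedges]
    exact List.mem_append_right _ (List.mem_singleton.2 rfl)
  · intro f hf
    exact hedgeprop f hf
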